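/- (Quadratic-form representations of the Hausman statistics.) Under the rank condition: (i) if σ̃² ≠ 0 then H₂ := T·(β̃−β̂)ᵀ(σ̃²Δ̂)⁻¹(β̃−β̂) = T·(yᵀΨ₀y)/(yᵀΛ₃y); (ii) if σ̂² ≠ 0 then H₃ := T·(β̃−β̂)ᵀ(σ̂²Δ̂)⁻¹(β̃−β̂) = T·(yᵀΨ₀y)/(yᵀΛ₄y); (iii) if Σ̂₁ := σ̃²Ω̂_IV⁻¹ − σ̂²Ω̂_LS⁻¹ is invertible then H₁ := T·(β̃−β̂)ᵀΣ̂₁⁻¹(β̃−β̂) = T·(C₁y)ᵀ[(yᵀΛ₃y)·Ω̂_IV⁻¹ − (yᵀΛ₄y)·Ω̂_LS⁻¹]⁻¹(C₁y). -/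

import Mathlib

open Matrix

variable {T G k₁ k₂ : ℕ}

/-- Orthogonal projection `P̄[A] = A(AᵀA)⁻¹Aᵀ` onto the column space of `A`. -/
noncomputable def projM {n : Type*} [Fintype n] [DecidableEq n]
    (A : Matrix (Fin T) n ℝ) : Matrix (Fin T) (Fin T) ℝ :=
  A * (Aᵀ * A)⁻¹ * Aᵀ

/-- The annihilator `M̄[A] = I - P̄[A]`. -/
noncomputable def annM {n : Type*} [Fintype n] [DecidableEq n]
    (A : Matrix (Fin T) n ℝ) : Matrix (Fin T) (Fin T) ℝ :=
  1 - projM A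

noncomputable def M1 (X₁ : Matrix (Fin T) (Fin k₁) ℝ) : Matrix (Fin T) (Fin T) ℝ :=
  annM X₁

noncomputable def Pm (X₁ : Matrix (Fin T) (Fin k₁) ℝ) (X₂ : Matrix (Fin T) (Fin k₂) ℝ) :
    Matrix (Fin T) (Fin T) ℝ :=
  projM (fromCols X₁ X₂)

noncomputable def Mm (X₁ : Matrix (Fin T) (Fin k₁) ℝ) (X₂ : Matrix (Fin T) (Fin k₂) ℝ) :
    Matrix (Fin T) (Fin T) ℝ :=
  annM (fromCols X₁ X₂)

noncomputable def N1 (X₁ : Matrix (Fin T) (Fin k₁) ℝ) (X₂ : Matrix (Fin T) (Fin k₂) ℝ) :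
    Matrix (Fin T) (Fin T) ℝ :=
  M1 X₁ * Pm X₁ X₂

noncomputable def B1 (Y : Matrix (Fin T) (Fin G) ℝ) (X₁ : Matrix (Fin T) (Fin k₁) ℝ) :
    Matrix (Fin G) (Fin T) ℝ :=
  (Yᵀ * M1 X₁ * Y)⁻¹ * (Yᵀ * M1 X₁)

noncomputable def B2 (Y : Matrix (Fin T) (Fin G) ℝ) (X₁ : Matrix (Fin T) (Fin k₁) ℝ)
    (X₂ : Matrix (Fin T) (Fin k₂) ℝ) : Matrix (Fin G) (Fin T) ℝ :=
  (Yᵀ * N1 X₁ X₂ * Y)⁻¹ * (Yᵀ * N1 X₁ X₂)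

noncomputable def C1 (Y : Matrix (Fin T) (Fin G) ℝ) (X₁ : Matrix (Fin T) (Fin k₁) ℝ)
    (X₂ : Matrix (Fin T) (Fin k₂) ℝ) : Matrix (Fin G) (Fin T) ℝ :=
  B2 Y X₁ X₂ - B1 Y X₁

/-- OLS estimator `β̂`. -/
noncomputable def betaOLS (y : Fin T → ℝ) (Y : Matrix (Fin T) (Fin G) ℝ)
    (X₁ : Matrix (Fin T) (Fin k₁) ℝ) : Fin G → ℝ :=
  B1 Y X₁ *ᵥ y

/-- 2SLS estimator `β̃`. -/
noncomputable def beta2S (y : Fin T → ℝ) (Y : Matrix (Fin T) (Fin G) ℝ)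
    (X₁ : Matrix (Fin T) (Fin k₁) ℝ) (X₂ : Matrix (Fin T) (Fin k₂) ℝ) : Fin G → ℝ :=
  B2 Y X₁ X₂ *ᵥ y

noncomputable def OmIV (Y : Matrix (Fin T) (Fin G) ℝ) (X₁ : Matrix (Fin T) (Fin k₁) ℝ)
    (X₂ : Matrix (Fin T) (Fin k₂) ℝ) : Matrix (Fin G) (Fin G) ℝ :=
  (T : ℝ)⁻¹ • (Yᵀ * N1 X₁ X₂ * Y)

noncomputable def OmLS (Y : Matrix (Fin T) (Fin G) ℝ) (X₁ : Matrix (Fin T) (Fin k₁) ℝ) :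
    Matrix (Fin G) (Fin G) ℝ :=
  (T : ℝ)⁻¹ • (Yᵀ * M1 X₁ * Y)

noncomputable def SigV (Y : Matrix (Fin T) (Fin G) ℝ) (X₁ : Matrix (Fin T) (Fin k₁) ℝ)
    (X₂ : Matrix (Fin T) (Fin k₂) ℝ) : Matrix (Fin G) (Fin G) ℝ :=
  (T : ℝ)⁻¹ • (Yᵀ * Mm X₁ X₂ * Y)

noncomputable def Dhat (Y : Matrix (Fin T) (Fin G) ℝ) (X₁ : Matrix (Fin T) (Fin k₁) ℝ)
    (X₂ : Matrix (Fin T) (Fin k₂) ℝ) : Matrix (Fin G) (Fin G) ℝ :=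
  (OmIV Y X₁ X₂)⁻¹ - (OmLS Y X₁)⁻¹

noncomputable def Psi0 (Y : Matrix (Fin T) (Fin G) ℝ) (X₁ : Matrix (Fin T) (Fin k₁) ℝ)
    (X₂ : Matrix (Fin T) (Fin k₂) ℝ) : Matrix (Fin T) (Fin T) ℝ :=
  (C1 Y X₁ X₂)ᵀ * (Dhat Y X₁ X₂)⁻¹ * C1 Y X₁ X₂

noncomputable def N2 (Y : Matrix (Fin T) (Fin G) ℝ) (X₁ : Matrix (Fin T) (Fin k₁) ℝ)
    (X₂ : Matrix (Fin T) (Fin k₂) ℝ) : Matrix (Fin T) (Fin T) ℝ :=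
  1 - M1 X₁ * Y * B2 Y X₁ X₂

noncomputable def Lam1 (Y : Matrix (Fin T) (Fin G) ℝ) (X₁ : Matrix (Fin T) (Fin k₁) ℝ)
    (X₂ : Matrix (Fin T) (Fin k₂) ℝ) : Matrix (Fin T) (Fin T) ℝ :=
  (T : ℝ)⁻¹ • (N1 X₁ X₂ * annM (N1 X₁ X₂ * Y) * N1 X₁ X₂)

noncomputable def Lam2 (Y : Matrix (Fin T) (Fin G) ℝ) (X₁ : Matrix (Fin T) (Fin k₁) ℝ)
    (X₂ : Matrix (Fin T) (Fin k₂) ℝ) : Matrix (Fin T) (Fin T) ℝ :=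
  M1 X₁ * ((T : ℝ)⁻¹ • annM (M1 X₁ * Y) - Psi0 Y X₁ X₂) * M1 X₁

noncomputable def Lam3 (Y : Matrix (Fin T) (Fin G) ℝ) (X₁ : Matrix (Fin T) (Fin k₁) ℝ)
    (X₂ : Matrix (Fin T) (Fin k₂) ℝ) : Matrix (Fin T) (Fin T) ℝ :=
  (T : ℝ)⁻¹ • (M1 X₁ * (N2 Y X₁ X₂)ᵀ * N2 Y X₁ X₂ * M1 X₁)

noncomputable def Lam4 (Y : Matrix (Fin T) (Fin G) ℝ) (X₁ : Matrix (Fin T) (Fin k₁) ℝ) :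
    Matrix (Fin T) (Fin T) ℝ :=
  (T : ℝ)⁻¹ • (M1 X₁ * annM (M1 X₁ * Y) * M1 X₁)

def Ybar (Y : Matrix (Fin T) (Fin G) ℝ) (X₁ : Matrix (Fin T) (Fin k₁) ℝ) :
    Matrix (Fin T) (Fin G ⊕ Fin k₁) ℝ :=
  fromCols Y X₁

def Zfull (Y : Matrix (Fin T) (Fin G) ℝ) (X₁ : Matrix (Fin T) (Fin k₁) ℝ)
    (X₂ : Matrix (Fin T) (Fin k₂) ℝ) : Matrix (Fin T) (Fin G ⊕ (Fin k₁ ⊕ Fin k₂)) ℝ :=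
  fromCols Y (fromCols X₁ X₂)

noncomputable def PsiR (Y : Matrix (Fin T) (Fin G) ℝ) (X₁ : Matrix (Fin T) (Fin k₁) ℝ)
    (X₂ : Matrix (Fin T) (Fin k₂) ℝ) : Matrix (Fin T) (Fin T) ℝ :=
  (T : ℝ)⁻¹ • (annM (Ybar Y X₁) - annM (Zfull Y X₁ X₂))

noncomputable def LamR (Y : Matrix (Fin T) (Fin G) ℝ) (X₁ : Matrix (Fin T) (Fin k₁) ℝ)
    (X₂ : Matrix (Fin T) (Fin k₂) ℝ) : Matrix (Fin T) (Fin T) ℝ :=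
  (T : ℝ)⁻¹ • annM (Zfull Y X₁ X₂)

/-- `σ̂² = (1/T)(y−Yβ̂)ᵀM₁(y−Yβ̂)`. -/
noncomputable def sigHat2 (y : Fin T → ℝ) (Y : Matrix (Fin T) (Fin G) ℝ)
    (X₁ : Matrix (Fin T) (Fin k₁) ℝ) : ℝ :=
  (T : ℝ)⁻¹ * ((y - Y *ᵥ betaOLS y Y X₁) ⬝ᵥ (M1 X₁ *ᵥ (y - Y *ᵥ betaOLS y Y X₁)))

/-- `σ̃² = (1/T)(y−Yβ̃)ᵀM₁(y−Yβ̃)`. -/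
noncomputable def sigTil2 (y : Fin T → ℝ) (Y : Matrix (Fin T) (Fin G) ℝ)
    (X₁ : Matrix (Fin T) (Fin k₁) ℝ) (X₂ : Matrix (Fin T) (Fin k₂) ℝ) : ℝ :=
  (T : ℝ)⁻¹ * ((y - Y *ᵥ beta2S y Y X₁ X₂) ⬝ᵥ (M1 X₁ *ᵥ (y - Y *ᵥ beta2S y Y X₁ X₂)))

/-- `σ̃₁² = (1/T)(y−Yβ̃)ᵀN₁(y−Yβ̃)`. -/
noncomputable def sigTil1sq (y : Fin T → ℝ) (Y : Matrix (Fin T) (Fin G) ℝ)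
    (X₁ : Matrix (Fin T) (Fin k₁) ℝ) (X₂ : Matrix (Fin T) (Fin k₂) ℝ) : ℝ :=
  (T : ℝ)⁻¹ * ((y - Y *ᵥ beta2S y Y X₁ X₂) ⬝ᵥ (N1 X₁ X₂ *ᵥ (y - Y *ᵥ beta2S y Y X₁ X₂)))

/-- `σ̃₂² = σ̂² − (β̃−β̂)ᵀΔ̂⁻¹(β̃−β̂)`. -/
noncomputable def sigTil2sq (y : Fin T → ℝ) (Y : Matrix (Fin T) (Fin G) ℝ)
    (X₁ : Matrix (Fin T) (Fin k₁) ℝ) (X₂ : Matrix (Fin T) (Fin k₂) ℝ) : ℝ :=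
  sigHat2 y Y X₁ -
    (beta2S y Y X₁ X₂ - betaOLS y Y X₁) ⬝ᵥ
      ((Dhat Y X₁ X₂)⁻¹ *ᵥ (beta2S y Y X₁ X₂ - betaOLS y Y X₁))

/-- The rank condition: `X₁`, `X = [X₁, X₂]`, `[Y, X]` and `[P̄[X]Y, X₁]` all have
full column rank. -/
def RankCond (Y : Matrix (Fin T) (Fin G) ℝ) (X₁ : Matrix (Fin T) (Fin k₁) ℝ)
    (X₂ : Matrix (Fin T) (Fin k₂) ℝ) : Prop :=
  X₁.rank = k₁ ∧ (fromCols X₁ X₂).rank = k₁ + k₂ ∧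
    (fromCols Y (fromCols X₁ X₂)).rank = G + (k₁ + k₂) ∧
    (fromCols (Pm X₁ X₂ * Y) X₁).rank = G + k₁


section Helpers

lemma dotQuad {m n : Type*} [Fintype m] [Fintype n] (A : Matrix m n ℝ) (v : n → ℝ)
    (x : m → ℝ) : v ⬝ᵥ (Aᵀ *ᵥ x) = (A *ᵥ v) ⬝ᵥ x := by
  rw [mulVec_transpose, dotProduct_comm, ← dotProduct_mulVec, dotProduct_comm]

lemma injOfKer {m n : Type*} [Fintype m] [Fintype n] {A : Matrix m n ℝ}
    (h : ∀ w, A *ᵥ w = 0 → w = 0) : Function.Injective A.mulVec := by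
  intro u v huv
  have h2 := h (u - v) (by rw [mulVec_sub, huv, sub_self])
  exact sub_eq_zero.mp h2

lemma injOfRank {m n : Type*} [Fintype m] [Fintype n] [DecidableEq n] {A : Matrix m n ℝ}
    (h : A.rank = Fintype.card n) : Function.Injective A.mulVec := by
  apply injOfKer
  intro w hw
  have h' : Module.finrank ℝ (LinearMap.range A.mulVecLin) = Fintype.card n := h
  have h1 := LinearMap.finrank_range_add_finrank_ker A.mulVecLin
  rw [Module.finrank_fintype_fun_eq_card, h'] at h1
  have h2 : Module.finrank ℝ (LinearMap.ker A.mulVecLin) = 0 := by omega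
  have h3 : LinearMap.ker A.mulVecLin = ⊥ := Submodule.finrank_eq_zero.mp h2
  have h4 : w ∈ LinearMap.ker A.mulVecLin := by
    simpa [LinearMap.mem_ker, Matrix.mulVecLin_apply] using hw
  simpa [h3] using h4

lemma isUnitTMul {m n : Type*} [Fintype m] [Fintype n] [DecidableEq n] {A : Matrix m n ℝ}
    (h : ∀ w, A *ᵥ w = 0 → w = 0) : IsUnit (Aᵀ * A) := by
  rw [← Matrix.mulVec_injective_iff_isUnit]
  apply injOfKer
  intro w hw
  apply h
  have h2 : (A *ᵥ w) ⬝ᵥ (A *ᵥ w) = 0 := by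
    have h3 := congrArg (fun z => w ⬝ᵥ z) hw
    simpa [← Matrix.mulVec_mulVec, dotQuad] using h3
  exact dotProduct_self_eq_zero.mp h2

lemma smulInv {n : Type*} [Fintype n] [DecidableEq n] (c : ℝ) (A : Matrix n n ℝ) (hc : c ≠ 0) :
    (c • A)⁻¹ = c⁻¹ • A⁻¹ := by
  by_cases h : IsUnit A.det
  · have : Invertible c := invertibleOfNonzero hc
    rw [Matrix.inv_smul (A := A) c h, invOf_eq_right_inv (mul_inv_cancel₀ hc)]
  · have h2 : ¬IsUnit ((c • A).det) := by
      rw [Matrix.det_smul]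
      intro hu
      exact h (isUnit_of_mul_isUnit_right hu)
    rw [Matrix.nonsing_inv_apply_not_isUnit _ h, Matrix.nonsing_inv_apply_not_isUnit _ h2,
      smul_zero]

lemma projM_mul_self {T : ℕ} {n : Type*} [Fintype n] [DecidableEq n] {A : Matrix (Fin T) n ℝ}
    (h : IsUnit (Aᵀ * A)) : projM A * A = A := by
  have hd := (Matrix.isUnit_iff_isUnit_det _).mp h
  rw [projM, Matrix.mul_assoc, Matrix.mul_assoc, Matrix.nonsing_inv_mul _ hd, Matrix.mul_one]

lemma projM_transpose {T : ℕ} {n : Type*} [Fintype n] [DecidableEq n] (A : Matrix (Fin T) n ℝ) :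
    (projM A)ᵀ = projM A := by
  have h : (Aᵀ * A)ᵀ = Aᵀ * A := by rw [transpose_mul, transpose_transpose]
  rw [projM, transpose_mul, transpose_mul, transpose_transpose,
    Matrix.transpose_nonsing_inv, h, Matrix.mul_assoc]

lemma projM_idem {T : ℕ} {n : Type*} [Fintype n] [DecidableEq n] {A : Matrix (Fin T) n ℝ}
    (h : IsUnit (Aᵀ * A)) : projM A * projM A = projM A := by
  have h1 : projM A * projM A = projM A * A * ((Aᵀ * A)⁻¹ * Aᵀ) := by
    rw [projM]; simp only [Matrix.mul_assoc]
  rw [h1, projM_mul_self h, projM, ← Matrix.mul_assoc]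

end Helpers
/-- **Quadratic-form representations of the Hausman statistics.**  Under the rank
condition: (i) if `σ̃² ≠ 0` then `H₂ = T(β̃−β̂)ᵀ(σ̃²Δ̂)⁻¹(β̃−β̂) = T·(yᵀΨ₀y)/(yᵀΛ₃y)`;
(ii) if `σ̂² ≠ 0` then `H₃ = T(β̃−β̂)ᵀ(σ̂²Δ̂)⁻¹(β̃−β̂) = T·(yᵀΨ₀y)/(yᵀΛ₄y)`;
(iii) if `Σ̂₁ = σ̃²Ω̂_IV⁻¹ − σ̂²Ω̂_LS⁻¹` is invertible then
`H₁ = T(β̃−β̂)ᵀΣ̂₁⁻¹(β̃−β̂) = T(C₁y)ᵀ[(yᵀΛ₃y)Ω̂_IV⁻¹ − (yᵀΛ₄y)Ω̂_LS⁻¹]⁻¹(C₁y)`. -/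
theorem stmt13 {T G k₁ k₂ : ℕ}
    (hT : 0 < T) (hG : 0 < G) (hk₁ : 0 < k₁) (hk₂ : 0 < k₂)
    (y : Fin T → ℝ) (Y : Matrix (Fin T) (Fin G) ℝ)
    (X₁ : Matrix (Fin T) (Fin k₁) ℝ) (X₂ : Matrix (Fin T) (Fin k₂) ℝ)
    (hrank : RankCond Y X₁ X₂) :
    (sigTil2 y Y X₁ X₂ ≠ 0 →
      (T : ℝ) *
          ((beta2S y Y X₁ X₂ - betaOLS y Y X₁) ⬝ᵥ
            ((sigTil2 y Y X₁ X₂ • Dhat Y X₁ X₂)⁻¹ *ᵥ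
              (beta2S y Y X₁ X₂ - betaOLS y Y X₁)))
        = (T : ℝ) * (y ⬝ᵥ (Psi0 Y X₁ X₂ *ᵥ y) / (y ⬝ᵥ (Lam3 Y X₁ X₂ *ᵥ y)))) ∧
    (sigHat2 y Y X₁ ≠ 0 →
      (T : ℝ) *
          ((beta2S y Y X₁ X₂ - betaOLS y Y X₁) ⬝ᵥ
            ((sigHat2 y Y X₁ • Dhat Y X₁ X₂)⁻¹ *ᵥ
              (beta2S y Y X₁ X₂ - betaOLS y Y X₁)))
        = (T : ℝ) * (y ⬝ᵥ (Psi0 Y X₁ X₂ *ᵥ y) / (y ⬝ᵥ (Lam4 Y X₁ *ᵥ y)))) ∧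
    (IsUnit (sigTil2 y Y X₁ X₂ • (OmIV Y X₁ X₂)⁻¹ - sigHat2 y Y X₁ • (OmLS Y X₁)⁻¹) →
      (T : ℝ) *
          ((beta2S y Y X₁ X₂ - betaOLS y Y X₁) ⬝ᵥ
            ((sigTil2 y Y X₁ X₂ • (OmIV Y X₁ X₂)⁻¹ -
                sigHat2 y Y X₁ • (OmLS Y X₁)⁻¹)⁻¹ *ᵥ
              (beta2S y Y X₁ X₂ - betaOLS y Y X₁)))
        = (T : ℝ) *
            ((C1 Y X₁ X₂ *ᵥ y) ⬝ᵥ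
              (((y ⬝ᵥ (Lam3 Y X₁ X₂ *ᵥ y)) • (OmIV Y X₁ X₂)⁻¹ -
                  (y ⬝ᵥ (Lam4 Y X₁ *ᵥ y)) • (OmLS Y X₁)⁻¹)⁻¹ *ᵥ
                (C1 Y X₁ X₂ *ᵥ y)))) := by
  obtain ⟨hr1, hr2, hr3, hr4⟩ := hrank
  -- kernels and units of Gram matrices
  have ker1 : ∀ w, X₁ *ᵥ w = 0 → w = 0 := by
    intro w hw
    have hinj := injOfRank (A := X₁) (by simpa using hr1)
    exact hinj (by rw [hw, mulVec_zero])
  have kerX : ∀ w, fromCols X₁ X₂ *ᵥ w = 0 → w = 0 := by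
    intro w hw
    have hinj := injOfRank (A := fromCols X₁ X₂) (by simpa using hr2)
    exact hinj (by rw [hw, mulVec_zero])
  have hU1 : IsUnit (X₁ᵀ * X₁) := isUnitTMul ker1
  have hUX : IsUnit ((fromCols X₁ X₂)ᵀ * fromCols X₁ X₂) := isUnitTMul kerX
  have hZinj : Function.Injective (fromCols Y (fromCols X₁ X₂)).mulVec :=
    injOfRank (by simpa using hr3)
  have hWinj : Function.Injective (fromCols (Pm X₁ X₂ * Y) X₁).mulVec :=
    injOfRank (by simpa using hr4)
  -- projection algebra
  have hP1sq : projM X₁ * projM X₁ = projM X₁ := projM_idem hU1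
  have hP1T : (projM X₁)ᵀ = projM X₁ := projM_transpose X₁
  have hPfsq : Pm X₁ X₂ * Pm X₁ X₂ = Pm X₁ X₂ := projM_idem hUX
  have hPfT : (Pm X₁ X₂)ᵀ = Pm X₁ X₂ := projM_transpose _
  have hPX₁ : Pm X₁ X₂ * X₁ = X₁ := by
    have h := projM_mul_self hUX
    rw [Matrix.mul_fromCols] at h
    have h2 := ((Matrix.fromCols_ext_iff _ _ _ _).mp h).1
    rw [Pm]
    exact h2
  have hPP1 : Pm X₁ X₂ * projM X₁ = projM X₁ := by
    rw [projM, ← Matrix.mul_assoc, ← Matrix.mul_assoc, hPX₁]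
  have hP1P : projM X₁ * Pm X₁ X₂ = projM X₁ := by
    have h := congrArg Matrix.transpose hPP1
    rwa [Matrix.transpose_mul, hP1T, hPfT] at h
  have hM1T : (M1 X₁)ᵀ = M1 X₁ := by
    rw [M1, annM, Matrix.transpose_sub, Matrix.transpose_one, hP1T]
  have hM1sq : M1 X₁ * M1 X₁ = M1 X₁ := by
    rw [M1, annM, mul_sub, mul_one, sub_mul, one_mul, hP1sq, sub_self, sub_zero]
  have hN1eq : N1 X₁ X₂ = Pm X₁ X₂ - projM X₁ := by
    rw [N1, M1, annM, sub_mul, one_mul, hP1P]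
  have hN1T : (N1 X₁ X₂)ᵀ = N1 X₁ X₂ := by
    rw [hN1eq, Matrix.transpose_sub, hPfT, hP1T]
  have hN1M1 : N1 X₁ X₂ * M1 X₁ = N1 X₁ X₂ := by
    rw [hN1eq, M1, annM, mul_sub, mul_one, sub_mul, hPP1, hP1sq, sub_self, sub_zero]
  have hN1sq : N1 X₁ X₂ * N1 X₁ X₂ = N1 X₁ X₂ := by
    rw [hN1eq, mul_sub, sub_mul, sub_mul, hPfsq, hPP1, hP1P, hP1sq, sub_self, sub_zero]
  -- kernels of M₁Y and N₁Y
  have hproj1 : ∀ z : Fin T → ℝ, M1 X₁ *ᵥ z = 0 →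
      z = X₁ *ᵥ (((X₁ᵀ * X₁)⁻¹ * X₁ᵀ) *ᵥ z) := by
    intro z hz
    have h1 : z - projM X₁ *ᵥ z = 0 := by
      rw [M1, annM, sub_mulVec, one_mulVec] at hz
      exact hz
    have h2 : z = projM X₁ *ᵥ z := sub_eq_zero.mp h1
    rw [projM, Matrix.mul_assoc, ← mulVec_mulVec] at h2
    exact h2
  have kerMY : ∀ w : Fin G → ℝ, (M1 X₁ * Y) *ᵥ w = 0 → w = 0 := by
    intro w hw
    have hz := hproj1 (Y *ᵥ w) (by rwa [mulVec_mulVec])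
    set c := ((X₁ᵀ * X₁)⁻¹ * X₁ᵀ) *ᵥ (Y *ᵥ w) with hc
    have hbig : fromCols Y (fromCols X₁ X₂) *ᵥ Sum.elim w (Sum.elim (-c) 0) =
        fromCols Y (fromCols X₁ X₂) *ᵥ 0 := by
      rw [mulVec_zero, fromCols_mulVec_sumElim, fromCols_mulVec_sumElim, mulVec_zero,
        add_zero, mulVec_neg, hz]
      exact add_neg_cancel _
    have h4 := hZinj hbig
    funext j
    exact congrFun h4 (Sum.inl j)
  have kerNY : ∀ w : Fin G → ℝ, (N1 X₁ X₂ * Y) *ᵥ w = 0 → w = 0 := by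
    intro w hw
    have hw' : M1 X₁ *ᵥ ((Pm X₁ X₂ * Y) *ᵥ w) = 0 := by
      rw [mulVec_mulVec, ← Matrix.mul_assoc]
      exact hw
    have hz := hproj1 _ hw'
    set c := ((X₁ᵀ * X₁)⁻¹ * X₁ᵀ) *ᵥ ((Pm X₁ X₂ * Y) *ᵥ w) with hc
    have hbig : fromCols (Pm X₁ X₂ * Y) X₁ *ᵥ Sum.elim w (-c) =
        fromCols (Pm X₁ X₂ * Y) X₁ *ᵥ 0 := by
      rw [mulVec_zero, fromCols_mulVec_sumElim, mulVec_neg, hz]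
      exact add_neg_cancel _
    have h4 := hWinj hbig
    funext j
    exact congrFun h4 (Sum.inl j)
  -- Gram matrices of M₁Y and N₁Y
  have hMMY : M1 X₁ * (M1 X₁ * Y) = M1 X₁ * Y := by rw [← Matrix.mul_assoc, hM1sq]
  have hYMY : Yᵀ * M1 X₁ * Y = (M1 X₁ * Y)ᵀ * (M1 X₁ * Y) := by
    rw [Matrix.transpose_mul, hM1T]
    simp only [Matrix.mul_assoc]
    rw [hMMY]
  have hUYMY : IsUnit (Yᵀ * M1 X₁ * Y) := by rw [hYMY]; exact isUnitTMul kerMY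
  have hNNY : N1 X₁ X₂ * (N1 X₁ X₂ * Y) = N1 X₁ X₂ * Y := by rw [← Matrix.mul_assoc, hN1sq]
  have hYNY : Yᵀ * N1 X₁ X₂ * Y = (N1 X₁ X₂ * Y)ᵀ * (N1 X₁ X₂ * Y) := by
    rw [Matrix.transpose_mul, hN1T]
    simp only [Matrix.mul_assoc]
    rw [hNNY]
  have hUYNY : IsUnit (Yᵀ * N1 X₁ X₂ * Y) := by rw [hYNY]; exact isUnitTMul kerNY
  -- B matrices
  have hB2M1 : B2 Y X₁ X₂ * M1 X₁ = B2 Y X₁ X₂ := by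
    rw [B2, Matrix.mul_assoc _ (Yᵀ * N1 X₁ X₂) (M1 X₁), Matrix.mul_assoc Yᵀ (N1 X₁ X₂) (M1 X₁),
      hN1M1]
  have hB1M1 : B1 Y X₁ * M1 X₁ = B1 Y X₁ := by
    rw [B1, Matrix.mul_assoc _ (Yᵀ * M1 X₁) (M1 X₁), Matrix.mul_assoc Yᵀ (M1 X₁) (M1 X₁), hM1sq]
  -- K₂ = N₂M₁
  have hK2 : N2 Y X₁ X₂ * M1 X₁ = M1 X₁ - M1 X₁ * Y * B2 Y X₁ X₂ := by
    rw [N2, sub_mul, one_mul, Matrix.mul_assoc (M1 X₁ * Y), hB2M1]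
  have hLam3 : Lam3 Y X₁ X₂ = (T : ℝ)⁻¹ • ((M1 X₁ - M1 X₁ * Y * B2 Y X₁ X₂)ᵀ *
      (M1 X₁ - M1 X₁ * Y * B2 Y X₁ X₂)) := by
    rw [Lam3, ← hK2]
    congr 1
    rw [Matrix.transpose_mul, hM1T]
    simp only [Matrix.mul_assoc]
  -- K₁
  have hST : (Yᵀ * M1 X₁ * Y)ᵀ = Yᵀ * M1 X₁ * Y := by
    rw [Matrix.transpose_mul, Matrix.transpose_mul, Matrix.transpose_transpose, hM1T]
    simp only [Matrix.mul_assoc]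
  have hB1T : (B1 Y X₁)ᵀ = M1 X₁ * Y * (Yᵀ * M1 X₁ * Y)⁻¹ := by
    rw [B1, Matrix.transpose_mul, Matrix.transpose_mul, hM1T, Matrix.transpose_transpose,
      Matrix.transpose_nonsing_inv, hST]
  have hRT : (M1 X₁ * Y * B1 Y X₁)ᵀ = M1 X₁ * Y * B1 Y X₁ := by
    rw [Matrix.transpose_mul, hB1T, Matrix.transpose_mul, hM1T, B1]
    simp only [Matrix.mul_assoc]
  have hB1MY : B1 Y X₁ * (M1 X₁ * Y) = 1 := by
    have h5 : (Yᵀ * M1 X₁) * (M1 X₁ * Y) = Yᵀ * M1 X₁ * Y := by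
      rw [Matrix.mul_assoc, hMMY, ← Matrix.mul_assoc]
    rw [B1, Matrix.mul_assoc _ (Yᵀ * M1 X₁) (M1 X₁ * Y), h5,
      Matrix.nonsing_inv_mul _ ((Matrix.isUnit_iff_isUnit_det _).mp hUYMY)]
  have hRM1 : M1 X₁ * Y * B1 Y X₁ * M1 X₁ = M1 X₁ * Y * B1 Y X₁ := by
    rw [Matrix.mul_assoc (M1 X₁ * Y), hB1M1]
  have hM1R : M1 X₁ * (M1 X₁ * Y * B1 Y X₁) = M1 X₁ * Y * B1 Y X₁ := by
    rw [← Matrix.mul_assoc, ← Matrix.mul_assoc, hM1sq]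
  have hRR : M1 X₁ * Y * B1 Y X₁ * (M1 X₁ * Y * B1 Y X₁) = M1 X₁ * Y * B1 Y X₁ := by
    rw [Matrix.mul_assoc (M1 X₁ * Y), ← Matrix.mul_assoc (B1 Y X₁), hB1MY, Matrix.one_mul]
  have hK1sq : (M1 X₁ - M1 X₁ * Y * B1 Y X₁) * (M1 X₁ - M1 X₁ * Y * B1 Y X₁) =
      M1 X₁ - M1 X₁ * Y * B1 Y X₁ := by
    rw [mul_sub, sub_mul, sub_mul, hM1sq, hM1R, hRM1, hRR, sub_self, sub_zero]
  have hK1T : (M1 X₁ - M1 X₁ * Y * B1 Y X₁)ᵀ = M1 X₁ - M1 X₁ * Y * B1 Y X₁ := by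
    rw [Matrix.transpose_sub, hM1T, hRT]
  have hLam4 : Lam4 Y X₁ = (T : ℝ)⁻¹ • (M1 X₁ - M1 X₁ * Y * B1 Y X₁) := by
    rw [Lam4]
    congr 1
    rw [annM, projM, ← hYMY, B1, Matrix.transpose_mul, hM1T, mul_sub, mul_one, sub_mul, hM1sq,
      sub_right_inj]
    simp only [← Matrix.mul_assoc]
    rw [hM1sq, Matrix.mul_assoc, hM1sq]
  -- dot-product manipulation
  have hM1split : M1 X₁ = (M1 X₁)ᵀ * M1 X₁ := by rw [hM1T, hM1sq]
  have hdotM : ∀ v w : Fin T → ℝ, v ⬝ᵥ (M1 X₁ *ᵥ w) = (M1 X₁ *ᵥ v) ⬝ᵥ (M1 X₁ *ᵥ w) := by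
    intro v w
    conv_lhs => rw [hM1split, ← mulVec_mulVec]
    rw [dotQuad]
  have hA : y ⬝ᵥ (Lam3 Y X₁ X₂ *ᵥ y) = sigTil2 y Y X₁ X₂ := by
    have hKy : (M1 X₁ - M1 X₁ * Y * B2 Y X₁ X₂) *ᵥ y =
        M1 X₁ *ᵥ (y - Y *ᵥ beta2S y Y X₁ X₂) := by
      rw [sub_mulVec, mulVec_sub, beta2S, mulVec_mulVec, mulVec_mulVec]
    rw [hLam3, smul_mulVec, dotProduct_smul, ← mulVec_mulVec, dotQuad, hKy, ← hdotM,
      sigTil2, smul_eq_mul]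
  have hB : y ⬝ᵥ (Lam4 Y X₁ *ᵥ y) = sigHat2 y Y X₁ := by
    have hKy : (M1 X₁ - M1 X₁ * Y * B1 Y X₁) *ᵥ y =
        M1 X₁ *ᵥ (y - Y *ᵥ betaOLS y Y X₁) := by
      rw [sub_mulVec, mulVec_sub, betaOLS, mulVec_mulVec, mulVec_mulVec]
    rw [hLam4, smul_mulVec, dotProduct_smul,
      show (M1 X₁ - M1 X₁ * Y * B1 Y X₁) = (M1 X₁ - M1 X₁ * Y * B1 Y X₁)ᵀ *
        (M1 X₁ - M1 X₁ * Y * B1 Y X₁) from by rw [hK1T, hK1sq],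
      ← mulVec_mulVec, dotQuad, hKy, ← hdotM, sigHat2, smul_eq_mul]
  have hd : beta2S y Y X₁ X₂ - betaOLS y Y X₁ = C1 Y X₁ X₂ *ᵥ y := by
    rw [C1, sub_mulVec]
    rfl
  have hPsi : y ⬝ᵥ (Psi0 Y X₁ X₂ *ᵥ y) =
      (C1 Y X₁ X₂ *ᵥ y) ⬝ᵥ ((Dhat Y X₁ X₂)⁻¹ *ᵥ (C1 Y X₁ X₂ *ᵥ y)) := by
    rw [Psi0, ← mulVec_mulVec, ← mulVec_mulVec, dotQuad]
  refine ⟨fun hσ => ?_, fun hσ => ?_, fun _ => ?_⟩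
  · rw [hd, hPsi, hA, smulInv _ _ hσ, smul_mulVec, dotProduct_smul, smul_eq_mul,
      div_eq_inv_mul]
  · rw [hd, hPsi, hB, smulInv _ _ hσ, smul_mulVec, dotProduct_smul, smul_eq_mul,
      div_eq_inv_mul]
  · rw [hd, hA, hB]
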